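/- Let ρ₁ > 0, θ₁, θ₂ ∈ ℝ with α = θ₁ − θ₂, and suppose ρ₁ ≤ √(1 + cos α). Then the squared distance from the diagonal point P = (ρ₁ e^{iθ₁}, ρ₁ e^{iθ₂}) to Γ is dist(P, Γ)² = 2ρ₁² − 2ρ₁√(1 + cos α) + 1, and this distance is attained at the point of Γ with ρ = 1, i.e. at ((√2/2) e^{iθ*}, (√2/2) e^{iθ*}) for a suitable θ*. -/

import Mathlib

/- STATEMENT 9: squared distance of a diagonal point to Γ when ρ₁ ≤ √(1 + cos α), attained at the point of Γ with ρ = 1. -/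

noncomputable section

open Complex Metric
open scoped Real

/-- ℂ² with the Euclidean (ℝ⁴) distance. -/
abbrev C2 : Type := EuclideanSpace ℂ (Fin 2)

/-- The point (z, w) ∈ ℂ². -/
def pt (z w : ℂ) : C2 := (WithLp.equiv 2 (Fin 2 → ℂ)).symm ![z, w]

/-- The point of Γ with parameters (ρ, θ). -/
def gpt (ρ θ : ℝ) : C2 :=
  pt (((Real.sqrt 2 / 2 * ρ : ℝ) : ℂ) * Complex.exp ((θ : ℂ) * Complex.I))
     (((Real.sqrt 2 / 2 * ρ⁻¹ : ℝ) : ℂ) * Complex.exp ((θ : ℂ) * Complex.I))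

/-- The special Lagrangian surface Γ ⊂ ℂ². -/
def Gam : Set C2 := {p | ∃ ρ θ : ℝ, 0 < ρ ∧ p = gpt ρ θ}

/-- The point (ρ₁ e^{iθ₁}, ρ₂ e^{iθ₂}) ∈ ℂ². -/
def ppt (ρ₁ θ₁ ρ₂ θ₂ : ℝ) : C2 :=
  pt ((ρ₁ : ℂ) * Complex.exp ((θ₁ : ℂ) * Complex.I))
     ((ρ₂ : ℂ) * Complex.exp ((θ₂ : ℂ) * Complex.I))


lemma dist_pt_sq (z w z' w' : ℂ) :
    dist (pt z w) (pt z' w') ^ 2 = ‖z - z'‖ ^ 2 + ‖w - w'‖ ^ 2 := by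
  rw [EuclideanSpace.dist_eq, Real.sq_sqrt (by positivity)]
  simp [pt, Fin.sum_univ_two, Complex.dist_eq]

lemma myAbsSubSq (a b φ ψ : ℝ) :
    ‖(a:ℂ) * Complex.exp ((φ:ℂ)*Complex.I) - (b:ℂ) * Complex.exp ((ψ:ℂ)*Complex.I)‖ ^ 2
      = a^2 + b^2 - 2*a*b*Real.cos (φ - ψ) := by
  rw [Complex.sq_norm]
  simp [Complex.normSq_apply, Complex.exp_mul_I, Real.cos_sub, Complex.cos_ofReal_re, Complex.sin_ofReal_re]
  nlinarith [Real.sin_sq_add_cos_sq φ, Real.sin_sq_add_cos_sq ψ]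

lemma dist_clean (ρ₁ θ₁ θ₂ ρ θ : ℝ) :
    dist (ppt ρ₁ θ₁ ρ₁ θ₂) (gpt ρ θ) ^ 2
      = 2*ρ₁^2 + ρ^2/2 + ρ⁻¹^2/2
        - Real.sqrt 2 * ρ₁ * (ρ*Real.cos (θ₁-θ) + ρ⁻¹*Real.cos (θ₂-θ)) := by
  rw [ppt, gpt, dist_pt_sq, myAbsSubSq, myAbsSubSq]
  have hq2 : Real.sqrt 2 ^ 2 = 2 := Real.sq_sqrt (by norm_num)
  linear_combination ((ρ^2 + ρ⁻¹^2)/4) * hq2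


lemma myLbound (ρ θ₁ θ₂ θ : ℝ) (hρ : 0 < ρ) :
    ρ*Real.cos (θ₁-θ) + ρ⁻¹*Real.cos (θ₂-θ)
      ≤ Real.sqrt (ρ^2 + ρ⁻¹^2 + 2*Real.cos (θ₁-θ₂)) := by
  set A := ρ*Real.cos θ₁ + ρ⁻¹*Real.cos θ₂ with hA
  set B := ρ*Real.sin θ₁ + ρ⁻¹*Real.sin θ₂ with hB
  have hρi : ρ * ρ⁻¹ = 1 := mul_inv_cancel₀ hρ.ne'
  have hAB : A^2 + B^2 = ρ^2 + ρ⁻¹^2 + 2*Real.cos (θ₁-θ₂) := by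
    rw [hA, hB, Real.cos_sub]
    nlinarith [Real.sin_sq_add_cos_sq θ₁, Real.sin_sq_add_cos_sq θ₂]
  have hL : ρ*Real.cos (θ₁-θ) + ρ⁻¹*Real.cos (θ₂-θ) = A*Real.cos θ + B*Real.sin θ := by
    rw [hA, hB, Real.cos_sub, Real.cos_sub]; ring
  rw [hL, ← hAB]
  have h0 : (0:ℝ) ≤ A^2 + B^2 := by positivity
  have hr := Real.sq_sqrt h0
  nlinarith [Real.sqrt_nonneg (A^2+B^2), Real.sin_sq_add_cos_sq θ,
    sq_nonneg (A*Real.sin θ - B*Real.cos θ),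
    sq_nonneg (Real.sqrt (A^2+B^2) - A*Real.cos θ - B*Real.sin θ)]

lemma myArg (θ₁ θ₂ : ℝ) :
    Real.cos (θ₁ - (Complex.exp ((θ₁:ℂ)*Complex.I) + Complex.exp ((θ₂:ℂ)*Complex.I)).arg)
    + Real.cos (θ₂ - (Complex.exp ((θ₁:ℂ)*Complex.I) + Complex.exp ((θ₂:ℂ)*Complex.I)).arg)
      = Real.sqrt 2 * Real.sqrt (1 + Real.cos (θ₁ - θ₂)) := by
  set z := Complex.exp ((θ₁:ℂ)*Complex.I) + Complex.exp ((θ₂:ℂ)*Complex.I) with hzdef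
  set θs := z.arg with hθs
  have habs : ‖z‖ = Real.sqrt 2 * Real.sqrt (1 + Real.cos (θ₁ - θ₂)) := by
    have h2 : ‖z‖ ^ 2 = 2 + 2*Real.cos (θ₁ - θ₂) := by
      rw [Complex.sq_norm, hzdef]
      simp [Complex.normSq_apply, Complex.exp_mul_I, Real.cos_sub,
        Complex.cos_ofReal_re, Complex.sin_ofReal_re]
      nlinarith [Real.sin_sq_add_cos_sq θ₁, Real.sin_sq_add_cos_sq θ₂]
    have : ‖z‖ = Real.sqrt (2 + 2*Real.cos (θ₁ - θ₂)) := by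
      rw [← h2, Real.sqrt_sq (norm_nonneg z)]
    rw [this, show (2:ℝ) + 2*Real.cos (θ₁-θ₂) = 2*(1+Real.cos (θ₁-θ₂)) by ring,
      Real.sqrt_mul (by norm_num)]
  have hz := Complex.norm_mul_exp_arg_mul_I z
  have h2 : z * Complex.exp (-(θs:ℂ) * Complex.I) = (‖z‖ : ℂ) := by
    conv_lhs => rw [← hz]
    rw [mul_assoc, ← Complex.exp_add]
    rw [show (z.arg:ℂ)*Complex.I + -(θs:ℂ)*Complex.I = 0 by rw [hθs]; ring]
    rw [Complex.exp_zero, mul_one]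
  rw [hzdef] at h2
  rw [add_mul, ← Complex.exp_add, ← Complex.exp_add] at h2
  rw [show (θ₁:ℂ)*Complex.I + -(θs:ℂ)*Complex.I = ((θ₁ - θs : ℝ):ℂ)*Complex.I by push_cast; ring,
      show (θ₂:ℂ)*Complex.I + -(θs:ℂ)*Complex.I = ((θ₂ - θs : ℝ):ℂ)*Complex.I by push_cast; ring] at h2
  have h3 := congrArg Complex.re h2
  simp only [Complex.add_re, Complex.exp_ofReal_mul_I_re, Complex.ofReal_re] at h3
  rw [habs] at h3
  exact h3


theorem sq_dist_diagonal_near (ρ₁ θ₁ θ₂ : ℝ) (h1 : 0 < ρ₁)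
    (hnear : ρ₁ ≤ Real.sqrt (1 + Real.cos (θ₁ - θ₂))) :
    (Metric.infDist (ppt ρ₁ θ₁ ρ₁ θ₂) Gam) ^ 2
        = 2 * ρ₁ ^ 2 - 2 * ρ₁ * Real.sqrt (1 + Real.cos (θ₁ - θ₂)) + 1 ∧
    ∃ θs : ℝ, dist (ppt ρ₁ θ₁ ρ₁ θ₂) (gpt 1 θs)
        = Metric.infDist (ppt ρ₁ θ₁ ρ₁ θ₂) Gam := by
  set s := Real.sqrt (1 + Real.cos (θ₁ - θ₂)) with hs
  have hc1 : (-1:ℝ) ≤ Real.cos (θ₁ - θ₂) := Real.neg_one_le_cos _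
  have hs0 : 0 ≤ s := Real.sqrt_nonneg _
  have hs2 : s^2 = 1 + Real.cos (θ₁ - θ₂) := Real.sq_sqrt (by linarith)
  have hq0 : (0:ℝ) ≤ Real.sqrt 2 := Real.sqrt_nonneg 2
  have hq2 : Real.sqrt 2 ^ 2 = 2 := Real.sq_sqrt (by norm_num)
  set P := ppt ρ₁ θ₁ ρ₁ θ₂ with hP
  set m := 2 * ρ₁ ^ 2 - 2 * ρ₁ * s + 1 with hm
  -- attainment point
  set θs := (Complex.exp ((θ₁:ℂ)*Complex.I) + Complex.exp ((θ₂:ℂ)*Complex.I)).arg with hθs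
  have hcos := myArg θ₁ θ₂
  rw [← hθs, ← hs] at hcos
  have hd0 : dist P (gpt 1 θs) ^ 2 = m := by
    rw [hP, dist_clean]
    rw [inv_one]
    have : Real.sqrt 2 * ρ₁ * (1*Real.cos (θ₁-θs) + 1*Real.cos (θ₂-θs))
        = ρ₁ * (Real.sqrt 2 * (Real.cos (θ₁-θs) + Real.cos (θ₂-θs))) := by ring
    rw [this, hcos, show Real.sqrt 2 * (Real.sqrt 2 * s) = Real.sqrt 2 ^2 * s by ring, hq2, hm]
    ring
  have hm0 : 0 ≤ m := by rw [← hd0]; positivity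
  -- lower bound for every point of Gam
  have hlow : ∀ p ∈ Gam, Real.sqrt m ≤ dist P p := by
    rintro p ⟨ρ, θ, hρ, rfl⟩
    have hρi : ρ * ρ⁻¹ = 1 := mul_inv_cancel₀ hρ.ne'
    have hL := myLbound ρ θ₁ θ₂ θ hρ
    set w := Real.sqrt (ρ^2 + ρ⁻¹^2 + 2*Real.cos (θ₁-θ₂)) with hw
    have hge2 : (2:ℝ) ≤ ρ^2 + ρ⁻¹^2 := by nlinarith [sq_nonneg (ρ - ρ⁻¹)]
    have hw2 : w^2 = ρ^2 + ρ⁻¹^2 + 2*Real.cos (θ₁-θ₂) := Real.sq_sqrt (by linarith)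
    have hw0 : 0 ≤ w := Real.sqrt_nonneg _
    have hws : Real.sqrt 2 * s ≤ w := by
      rw [hw, ← Real.sqrt_mul (by norm_num : (0:ℝ) ≤ 2),
        show (2:ℝ) * (1 + Real.cos (θ₁-θ₂)) = 2 + 2*Real.cos (θ₁-θ₂) by ring]
      exact Real.sqrt_le_sqrt (by linarith)
    have hsr : Real.sqrt 2 * ρ₁ ≤ Real.sqrt 2 * s := by
      exact mul_le_mul_of_nonneg_left hnear hq0
    have key : (w - Real.sqrt 2 * s) * (w + Real.sqrt 2 * s - 2*(Real.sqrt 2 * ρ₁)) ≥ 0 := by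
      apply mul_nonneg <;> linarith
    have key2 : w^2 - 2*s^2 - 2*(Real.sqrt 2 * ρ₁)*w + 4*ρ₁*s ≥ 0 := by
      have hexp : (w - Real.sqrt 2 * s) * (w + Real.sqrt 2 * s - 2*(Real.sqrt 2 * ρ₁))
          = w^2 - Real.sqrt 2^2 * s^2 - 2*(Real.sqrt 2*ρ₁)*w + 2*(Real.sqrt 2^2)*ρ₁*s := by ring
      rw [hexp, hq2] at key; linarith
    have hdist2 : m ≤ dist P (gpt ρ θ) ^ 2 := by
      rw [hP, dist_clean]
      have hLrho : Real.sqrt 2 * ρ₁ * (ρ*Real.cos (θ₁-θ) + ρ⁻¹*Real.cos (θ₂-θ))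
          ≤ Real.sqrt 2 * ρ₁ * w :=
        mul_le_mul_of_nonneg_left hL (by positivity)
      rw [hm]
      nlinarith [hw2, hs2, key2, hLrho]
    calc Real.sqrt m ≤ Real.sqrt (dist P (gpt ρ θ) ^ 2) := Real.sqrt_le_sqrt hdist2
      _ = dist P (gpt ρ θ) := Real.sqrt_sq dist_nonneg
  have hne : Gam.Nonempty := ⟨gpt 1 0, 1, 0, one_pos, rfl⟩
  have hinf_ge : Real.sqrt m ≤ Metric.infDist P Gam := by
    by_contra h
    push_neg at h
    obtain ⟨y, hy, hlt⟩ := (Metric.infDist_lt_iff hne).1 h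
    exact absurd hlt (not_lt.2 (hlow y hy))
  have hd0' : dist P (gpt 1 θs) = Real.sqrt m := by
    rw [← hd0, Real.sqrt_sq dist_nonneg]
  have hinf_le : Metric.infDist P Gam ≤ dist P (gpt 1 θs) :=
    Metric.infDist_le_dist_of_mem ⟨1, θs, one_pos, rfl⟩
  have hinf : Metric.infDist P Gam = Real.sqrt m := le_antisymm (hd0' ▸ hinf_le) hinf_ge
  constructor
  · rw [hinf, Real.sq_sqrt hm0]
  · exact ⟨θs, by rw [hinf, hd0']⟩

end
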